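/- Let R be a commutative ring, L a Lie algebra over R, and S a commutative semigroup. Then there exists a unique R-bilinear bracket on the R-module Finsupp S L of finitely supported functions from S to L satisfying ⁅Finsupp.single s x, Finsupp.single t y⁆ = Finsupp.single (s * t) ⁅x, y⁆ for all s, t ∈ S and x, y ∈ L, and this bracket makes Finsupp S L into a Lie algebra over R (it is alternating, and it satisfies the Jacobi/Leibniz identity). -/

import Mathlib

/-- **The S-expanded algebra** (Theorem 1 of the paper).
For a commutative ring `R`, a Lie algebra `L` over `R` and a commutative
semigroup `S`, there is a unique `R`-bilinear bracket on `S →₀ L` satisfying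
`⁅single s x, single t y⁆ = single (s * t) ⁅x, y⁆`, and this bracket is
alternating and satisfies the Leibniz/Jacobi identity, so that it makes
`S →₀ L` a Lie algebra over `R`. -/
theorem sExpansion_exists_unique_lieBracket
    (R : Type*) [CommRing R] (L : Type*) [LieRing L] [LieAlgebra R L]
    (S : Type*) [CommSemigroup S] :
    ∃ B : (S →₀ L) →ₗ[R] (S →₀ L) →ₗ[R] (S →₀ L),
      (∀ (s t : S) (x y : L),
        B (Finsupp.single s x) (Finsupp.single t y)
          = Finsupp.single (s * t) ⁅x, y⁆) ∧
      (∀ f : S →₀ L, B f f = 0) ∧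
      (∀ f g h : S →₀ L, B f (B g h) = B (B f g) h + B g (B f h)) ∧
      (∀ B' : (S →₀ L) →ₗ[R] (S →₀ L) →ₗ[R] (S →₀ L),
        (∀ (s t : S) (x y : L),
          B' (Finsupp.single s x) (Finsupp.single t y)
            = Finsupp.single (s * t) ⁅x, y⁆) → B' = B) := by
  classical
  set m : L →ₗ[R] L →ₗ[R] L :=
    LinearMap.mk₂ R (fun x y => ⁅x, y⁆) add_lie smul_lie lie_add lie_smul with hm
  set B : (S →₀ L) →ₗ[R] (S →₀ L) →ₗ[R] (S →₀ L) :=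
    Finsupp.lsum R fun s =>
      { toFun := fun x => Finsupp.lsum R fun t => (Finsupp.lsingle (s*t)) ∘ₗ (m x)
        map_add' := fun x y => by
          apply Finsupp.lhom_ext; intro t z; simp [hm]
        map_smul' := fun c x => by
          apply Finsupp.lhom_ext; intro t z; simp [hm] } with hB
  have hsingle : ∀ (s t : S) (x y : L),
      B (Finsupp.single s x) (Finsupp.single t y)
        = Finsupp.single (s * t) ⁅x, y⁆ := by
    intro s t x y
    simp [hB, hm]
  have anti : ∀ f g : S →₀ L, B f g + B g f = 0 := by
    have key : B + B.flip = 0 := by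
      apply Finsupp.lhom_ext'; intro s
      apply LinearMap.ext; intro x
      apply Finsupp.lhom_ext'; intro t
      apply LinearMap.ext; intro y
      simp only [LinearMap.add_apply, LinearMap.zero_apply, LinearMap.comp_apply,
        Finsupp.lsingle_apply, LinearMap.flip_apply, hsingle]
      rw [mul_comm t s, ← Finsupp.single_add, ← lie_skew y x, add_neg_cancel,
        Finsupp.single_zero]
    intro f g
    have h1 := congrFun (congrArg DFunLike.coe (congrFun (congrArg DFunLike.coe key) f)) g
    simpa using h1
  refine ⟨B, hsingle, ?_, ?_, ?_⟩
  · -- alternating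
    intro f
    induction f using Finsupp.induction_linear with
    | zero => simp
    | add f g hf hg =>
      simp only [map_add, LinearMap.add_apply, hf, hg, zero_add, add_zero]
      rw [add_comm]
      exact anti f g
    | single s x =>
      rw [hsingle]
      simp
  · -- Jacobi
    intro f g h
    induction f using Finsupp.induction_linear with
    | zero => simp
    | add f₁ f₂ h₁ h₂ => simp only [map_add, LinearMap.add_apply, h₁, h₂]; abel
    | single s x =>
      induction g using Finsupp.induction_linear with
      | zero => simp
      | add g₁ g₂ h₁ h₂ => simp only [map_add, LinearMap.add_apply, h₁, h₂]; abel
      | single t y =>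
        induction h using Finsupp.induction_linear with
        | zero => simp
        | add h₁ h₂ k₁ k₂ => simp only [map_add, LinearMap.add_apply, k₁, k₂]; abel
        | single u z =>
          rw [hsingle, hsingle, hsingle, hsingle, hsingle, hsingle]
          rw [mul_left_comm t s u, ← mul_assoc, ← Finsupp.single_add,
            leibniz_lie]
  · -- uniqueness
    intro B' hB'
    apply Finsupp.lhom_ext'; intro s
    apply LinearMap.ext; intro x
    apply Finsupp.lhom_ext'; intro t
    apply LinearMap.ext; intro y
    simp only [LinearMap.comp_apply, Finsupp.lsingle_apply, hB', hsingle]
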